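/- In any Kripke frame validating the axioms of GLB — (i) □ₙ(□ₙp → p) → □ₙp for n = 0,1, (ii) □₀p → □₁p, (iii) ◇₀p → □₁◇₀p — the accessibility relation R₁ of □₁ is empty. More precisely: if R₀ is transitive and conversely well-founded (corresponding to the Löb axiom for □₀), xR₁y implies xR₀y (corresponding to (ii)), and xR₀y together with xR₁y' implies y'R₀y (corresponding to (iii)), then R₁ = ∅. -/
import Mathlib

/-- In any Kripke frame with the frame properties corresponding to the GLB
axioms (`R₀` transitive and conversely well-founded, `R₁ ⊆ R₀`, and the
interaction property of axiom (iii)), the relation `R₁` is empty. -/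
theorem stmt_13 {W : Type*} (R0 R1 : W → W → Prop)
    (htrans : ∀ x y z, R0 x y → R0 y z → R0 x z)
    (hcwf : ∀ S : Set W, S.Nonempty → ∃ m ∈ S, ∀ y ∈ S, ¬ R0 m y)
    (h21 : ∀ x y, R1 x y → R0 x y)
    (h3 : ∀ x y y', R0 x y → R1 x y' → R0 y' y) :
    ∀ x y, ¬ R1 x y := by
  intro x y h
  have hyy : R0 y y := h3 x y y (h21 x y h) h
  obtain ⟨m, hm, hmax⟩ := hcwf {y} ⟨y, rfl⟩
  cases hm
  exact hmax y rfl hyy
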